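/- arXiv:0909.3220 — 2 statements merged into one kernel-verified Lean document; each statement's English description precedes it below -/
import Mathlib

section
/- Let X : U → ℝ^{n×m} be continuous on a domain U ⊆ ℝ^m × ℝ^n, let F = (F_1,…,F_n) : U → ℝ^n be C¹ with each component F_i a first integral of the total differential system (TD) on U and with the partial Jacobian matrix ∂_x F(t,x) invertible at every (t,x) ∈ U, and let S : U → ℝ^n be a differentiable map with (t, S(t,x)) ∈ U and F(t, S(t,x)) = x for all (t,x) ∈ U. Then ∂_{t_j} S(t,x) = X^j(t, S(t,x)) for all (t,x) ∈ U and all j = 1,…,m, where X^j = (X_{1j},…,X_{nj}) is the j-th column of X; that is, for each fixed x the map t ↦ S(t,x) is a solution of (TD). -/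
open scoped BigOperators

/-- Let `X : U → ℝ^{n×m}` be continuous on a domain `U ⊆ ℝᵐ × ℝⁿ`, let
`F = (F₁,…,F_n) : U → ℝⁿ` be `C¹` with every component a first integral of (TD) on `U` and
with partial Jacobian `∂_x F(t,x)` invertible at every point of `U`, and let `S : U → ℝⁿ` be
differentiable with `(t, S(t,x)) ∈ U` and `F(t, S(t,x)) = x` on `U`. Then
`∂_{t_j} S(t,x) = X^j(t, S(t,x))` on `U` for every `j`; that is, for each fixed `x` the map
`t ↦ S(t,x)` is a solution of (TD). -/
theorem inverse_of_firstIntegrals_is_solution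
    {m n : ℕ}
    (U : Set ((Fin m → ℝ) × (Fin n → ℝ)))
    (hUopen : IsOpen U) (hUconn : IsConnected U)
    (X : ((Fin m → ℝ) × (Fin n → ℝ)) → Fin n → Fin m → ℝ)
    (hX : ContinuousOn X U)
    (F : ((Fin m → ℝ) × (Fin n → ℝ)) → Fin n → ℝ)
    (hF : ContDiffOn ℝ 1 F U)
    (hFint : ∀ p ∈ U, ∀ (i : Fin n) (j : Fin m),
      fderiv ℝ (fun q => F q i) p ((Pi.single j 1 : Fin m → ℝ), fun i' => X p i' j) = 0)
    (hFinv : ∀ p ∈ U, Function.Bijective (fun v : Fin n → ℝ => fderiv ℝ F p (0, v)))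
    (S : ((Fin m → ℝ) × (Fin n → ℝ)) → Fin n → ℝ)
    (hSdiff : ∀ p ∈ U, DifferentiableAt ℝ S p)
    (hSin : ∀ p ∈ U, (p.1, S p) ∈ U)
    (hFS : ∀ p ∈ U, F (p.1, S p) = p.2) :
    ∀ p ∈ U, ∀ j : Fin m,
      fderiv ℝ S p ((Pi.single j 1 : Fin m → ℝ), 0)
        = fun i => X (p.1, S p) i j := by

  intro p hp j
  set q : (Fin m → ℝ) × (Fin n → ℝ) := (p.1, S p) with hq_def
  have hq : q ∈ U := hSin p hp
  have hFq : DifferentiableAt ℝ F q :=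
    (hF.contDiffAt (hUopen.mem_nhds hq)).differentiableAt one_ne_zero
  have hSp := hSdiff p hp
  have hφ : DifferentiableAt ℝ (fun r : (Fin m → ℝ) × (Fin n → ℝ) => (r.1, S r)) p :=
    DifferentiableAt.prodMk differentiableAt_fst hSp
  have hEq : (fun r : (Fin m → ℝ) × (Fin n → ℝ) => F (r.1, S r)) =ᶠ[nhds p]
      (fun r : (Fin m → ℝ) × (Fin n → ℝ) => r.2) := by
    filter_upwards [hUopen.mem_nhds hp] with x hx using hFS x hx
  have h1 : fderiv ℝ (fun r : (Fin m → ℝ) × (Fin n → ℝ) => F (r.1, S r)) p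
      = ContinuousLinearMap.snd ℝ (Fin m → ℝ) (Fin n → ℝ) := by
    rw [hEq.fderiv_eq, fderiv_snd]
  have hchain : fderiv ℝ (fun r : (Fin m → ℝ) × (Fin n → ℝ) => F (r.1, S r)) p =
      (fderiv ℝ F q).comp (fderiv ℝ (fun r : (Fin m → ℝ) × (Fin n → ℝ) => (r.1, S r)) p) :=
    fderiv_comp p hFq hφ
  have hφd : fderiv ℝ (fun r : (Fin m → ℝ) × (Fin n → ℝ) => (r.1, S r)) p
      ((Pi.single j 1 : Fin m → ℝ), 0)
      = ((Pi.single j 1 : Fin m → ℝ), fderiv ℝ S p ((Pi.single j 1 : Fin m → ℝ), 0)) := by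
    rw [DifferentiableAt.fderiv_prodMk differentiableAt_fst hSp]
    simp [fderiv_fst]
  set D : Fin n → ℝ := fderiv ℝ S p ((Pi.single j 1 : Fin m → ℝ), 0) with hD_def
  set Xc : Fin n → ℝ := fun i => X q i j with hXc_def
  have hD0 : fderiv ℝ F q ((Pi.single j 1 : Fin m → ℝ), D) = 0 := by
    have h2 := congrArg (fun L => L ((Pi.single j 1 : Fin m → ℝ), (0 : Fin n → ℝ))) (h1.symm.trans hchain)
    simp only [ContinuousLinearMap.comp_apply, hφd] at h2
    simpa using h2.symm
  have hcomp : ∀ i : Fin n, fderiv ℝ (fun r => F r i) q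
      = (ContinuousLinearMap.proj i).comp (fderiv ℝ F q) :=
    fun i => (((ContinuousLinearMap.proj i : (Fin n → ℝ) →L[ℝ] ℝ).hasFDerivAt).comp q
      hFq.hasFDerivAt).fderiv
  have hXc0 : fderiv ℝ F q ((Pi.single j 1 : Fin m → ℝ), Xc) = 0 := by
    funext i
    have := hFint q hq i j
    rw [hcomp i] at this
    simpa using this
  have hsub : fderiv ℝ F q (0, D - Xc) = 0 := by
    have : ((Pi.single j 1 : Fin m → ℝ), D) - ((Pi.single j 1 : Fin m → ℝ), Xc)
        = ((0 : Fin m → ℝ), D - Xc) := by simp [Prod.ext_iff]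
    rw [← this, map_sub, hD0, hXc0, sub_zero]
  have hzero : fderiv ℝ F q ((0 : Fin m → ℝ), (0 : Fin n → ℝ)) = 0 := by
    have : ((0 : Fin m → ℝ), (0 : Fin n → ℝ)) = (0 : (Fin m → ℝ) × (Fin n → ℝ)) := rfl
    rw [this, map_zero]
  have hinj := (hFinv q hq).injective
  have : D - Xc = 0 := hinj (show fderiv ℝ F q (0, D - Xc) = fderiv ℝ F q (0, 0) by rw [hsub, hzero])
  have hDXc : D = Xc := by rwa [sub_eq_zero] at this
  exact hDXc
end

section
/- Let X : U → ℝ^{n×m} be continuous on a product domain U = T × V, where T ⊆ ℝ^m is a connected domain and V ⊆ ℝ^n is a domain. Let F = (F_1,…,F_n) : U → ℝ^n be C¹ with each component F_i a first integral of the total differential system (TD) on U, with the partial Jacobian matrix ∂_x F(t,x) invertible at every (t,x) ∈ U, and with F(t,x) ∈ V for all (t,x) ∈ U. Let S : U → ℝ^n be a differentiable map with (t, S(t,x)) ∈ U, F(t, S(t,x)) = x, and S(t, F(t,x)) = x for all (t,x) ∈ U. Then every first integral Ψ ∈ C¹(U) of (TD) on U factors through F: for any fixed t₀ ∈ T, one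 has Ψ(t,x) = Φ(F(t,x)) for all (t,x) ∈ U, where Φ : V → ℝ is the function Φ(x) = Ψ(t₀, S(t₀,x)). -/
open Metric in
private lemma aux_const_of_hasFDerivAt_zero
    {E G : Type*} [NormedAddCommGroup E] [NormedSpace ℝ E]
    [NormedAddCommGroup G] [NormedSpace ℝ G]
    {s : Set E} (hs : IsOpen s) (hc : IsPreconnected s) {f : E → G}
    (hd : ∀ x ∈ s, HasFDerivAt f (0 : E →L[ℝ] G) x)
    {a b : E} (ha : a ∈ s) (hb : b ∈ s) : f a = f b := by
  have hloc : ∀ x ∈ s, ∀ᶠ y in nhds x, f y = f x := by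
    intro x hx
    obtain ⟨ε, hε, hball⟩ := Metric.isOpen_iff.1 hs x hx
    have hdiff : DifferentiableOn ℝ f (ball x ε) := fun y hy =>
      ((hd y (hball hy)).differentiableAt).differentiableWithinAt
    have hzero : ∀ y ∈ ball x ε, fderivWithin ℝ f (ball x ε) y = 0 := fun y hy =>
      ((hd y (hball hy)).hasFDerivWithinAt).fderivWithin (isOpen_ball.uniqueDiffWithinAt hy)
    filter_upwards [isOpen_ball.mem_nhds (mem_ball_self hε)] with y hy
    exact (convex_ball x ε).is_const_of_fderivWithin_eq_zero hdiff hzero hy (mem_ball_self hε)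
  set u : Set E := {x | x ∈ s ∧ f x = f a} with hu_def
  set v : Set E := {x | x ∈ s ∧ f x ≠ f a} with hv_def
  have hu : IsOpen u := by
    rw [isOpen_iff_mem_nhds]
    intro x hx
    filter_upwards [hloc x hx.1, hs.mem_nhds hx.1] with y hy1 hy2
    exact ⟨hy2, hy1.trans hx.2⟩
  have hv : IsOpen v := by
    rw [isOpen_iff_mem_nhds]
    intro x hx
    filter_upwards [hloc x hx.1, hs.mem_nhds hx.1] with y hy1 hy2
    exact ⟨hy2, hy1 ▸ hx.2⟩
  by_contra hne
  have hnon := hc u v hu hv (fun x hx => by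
      by_cases h : f x = f a
      · exact Or.inl ⟨hx, h⟩
      · exact Or.inr ⟨hx, h⟩)
    ⟨a, ha, ha, rfl⟩ ⟨b, hb, hb, fun h => hne h.symm⟩
  obtain ⟨x, -, hxu, hxv⟩ := hnon
  exact hxv.2 hxu.2

private lemma aux_pi_apply_eq_zero {m : ℕ} {G : Type*} [NormedAddCommGroup G]
    [NormedSpace ℝ G] (L : (Fin m → ℝ) →L[ℝ] G)
    (h : ∀ j : Fin m, L (Pi.single j 1) = 0) : L = 0 := by
  ext1 v
  have hv : v = ∑ j : Fin m, v j • (Pi.single j 1 : Fin m → ℝ) :=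
    calc v = ∑ j : Fin m, Pi.single j (v j) := (Finset.univ_sum_single v).symm
    _ = ∑ j : Fin m, v j • (Pi.single j 1 : Fin m → ℝ) :=
      Finset.sum_congr rfl fun j _ => by rw [← Pi.single_smul, smul_eq_mul, mul_one]
  rw [hv, map_sum]
  simp [h]

/-- Lemma 1.3. Let `X` be continuous on a product domain `U = T ×ˢ V`,
`T ⊆ ℝᵐ` connected, `V ⊆ ℝⁿ`. Let `F : U → ℝⁿ` be `C¹` with every component a first integral
of (TD) on `U`, with `∂_x F(t,x)` invertible everywhere and `F(t,x) ∈ V` on `U`, and let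
`S : U → ℝⁿ` be differentiable with `(t, S(t,x)) ∈ U`, `F(t, S(t,x)) = x`, and
`S(t, F(t,x)) = x` on `U`. Then every first integral `Ψ ∈ C¹(U)` of (TD) on `U` factors
through `F`: for any fixed `t₀ ∈ T`, `Ψ(t,x) = Φ(F(t,x))` on `U` where `Φ(x) = Ψ(t₀, S(t₀,x))`. -/
theorem firstIntegral_factors_through_basis
    {m n : ℕ}
    (T : Set (Fin m → ℝ)) (V : Set (Fin n → ℝ))
    (hTopen : IsOpen T) (hTconn : IsConnected T)
    (hVopen : IsOpen V) (hVconn : IsConnected V)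
    (X : ((Fin m → ℝ) × (Fin n → ℝ)) → Fin n → Fin m → ℝ)
    (hX : ContinuousOn X (T ×ˢ V))
    (F : ((Fin m → ℝ) × (Fin n → ℝ)) → Fin n → ℝ)
    (hF : ContDiffOn ℝ 1 F (T ×ˢ V))
    (hFint : ∀ p ∈ T ×ˢ V, ∀ (i : Fin n) (j : Fin m),
      fderiv ℝ (fun q => F q i) p ((Pi.single j 1 : Fin m → ℝ), fun i' => X p i' j) = 0)
    (hFinv : ∀ p ∈ T ×ˢ V, Function.Bijective (fun v : Fin n → ℝ => fderiv ℝ F p (0, v)))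
    (hFin : ∀ p ∈ T ×ˢ V, F p ∈ V)
    (S : ((Fin m → ℝ) × (Fin n → ℝ)) → Fin n → ℝ)
    (hSdiff : ∀ p ∈ T ×ˢ V, DifferentiableAt ℝ S p)
    (hSin : ∀ p ∈ T ×ˢ V, (p.1, S p) ∈ T ×ˢ V)
    (hFS : ∀ p ∈ T ×ˢ V, F (p.1, S p) = p.2)
    (hSF : ∀ p ∈ T ×ˢ V, S (p.1, F p) = p.2)
    (Ψ : ((Fin m → ℝ) × (Fin n → ℝ)) → ℝ)
    (hΨ : ContDiffOn ℝ 1 Ψ (T ×ˢ V))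
    (hΨint : ∀ p ∈ T ×ˢ V, ∀ j : Fin m,
      fderiv ℝ Ψ p ((Pi.single j 1 : Fin m → ℝ), fun i => X p i j) = 0)
    (t₀ : Fin m → ℝ) (ht₀ : t₀ ∈ T) :
    ∀ p ∈ T ×ˢ V, Ψ p = (fun x => Ψ (t₀, S (t₀, x))) (F p) := by
  have hUopen : IsOpen (T ×ˢ V) := hTopen.prod hVopen
  have hFd : ∀ p ∈ T ×ˢ V, DifferentiableAt ℝ F p := fun p hp =>
    ((hF.differentiableOn one_ne_zero) p hp).differentiableAt (hUopen.mem_nhds hp)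
  have hΨd : ∀ p ∈ T ×ˢ V, DifferentiableAt ℝ Ψ p := fun p hp =>
    ((hΨ.differentiableOn one_ne_zero) p hp).differentiableAt (hUopen.mem_nhds hp)
  -- derivative of the "graph" map r ↦ (r.1, S r)
  have hG : ∀ p ∈ T ×ˢ V, HasFDerivAt (fun r : (Fin m → ℝ) × (Fin n → ℝ) => (r.1, S r))
      ((ContinuousLinearMap.fst ℝ (Fin m → ℝ) (Fin n → ℝ)).prod (fderiv ℝ S p)) p :=
    fun p hp => HasFDerivAt.prodMk (hasFDerivAt_fst) (hSdiff p hp).hasFDerivAt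
  -- Step 1: the partial t-derivative of S is given by X at (p.1, S p)
  have hdS : ∀ p ∈ T ×ˢ V, ∀ j : Fin m,
      fderiv ℝ S p ((Pi.single j 1 : Fin m → ℝ), 0) = fun i => X (p.1, S p) i j := by
    intro p hp j
    set q := (p.1, S p) with hq_def
    have hq : q ∈ T ×ˢ V := hSin p hp
    -- chain rule: F ∘ graph = snd near p
    have hcomp : HasFDerivAt (fun r : (Fin m → ℝ) × (Fin n → ℝ) => F (r.1, S r))
        ((fderiv ℝ F q).comp
          ((ContinuousLinearMap.fst ℝ (Fin m → ℝ) (Fin n → ℝ)).prod (fderiv ℝ S p))) p :=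
      (hFd q hq).hasFDerivAt.comp p (hG p hp)
    have heq : (fun r : (Fin m → ℝ) × (Fin n → ℝ) => F (r.1, S r))
        =ᶠ[nhds p] (fun r => r.2) := by
      filter_upwards [hUopen.mem_nhds hp] with r hr
      exact hFS r hr
    have hsnd : HasFDerivAt (fun r : (Fin m → ℝ) × (Fin n → ℝ) => r.2)
        ((fderiv ℝ F q).comp
          ((ContinuousLinearMap.fst ℝ (Fin m → ℝ) (Fin n → ℝ)).prod (fderiv ℝ S p))) p :=
      hcomp.congr_of_eventuallyEq heq.symm
    have huniq : (fderiv ℝ F q).comp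
        ((ContinuousLinearMap.fst ℝ (Fin m → ℝ) (Fin n → ℝ)).prod (fderiv ℝ S p))
        = ContinuousLinearMap.snd ℝ (Fin m → ℝ) (Fin n → ℝ) :=
      hsnd.unique (hasFDerivAt_snd)
    have h1 : fderiv ℝ F q ((Pi.single j 1 : Fin m → ℝ),
        fderiv ℝ S p ((Pi.single j 1 : Fin m → ℝ), 0)) = 0 := by
      have := congrArg (fun L : ((Fin m → ℝ) × (Fin n → ℝ)) →L[ℝ] (Fin n → ℝ) =>
        L ((Pi.single j 1 : Fin m → ℝ), (0 : Fin n → ℝ))) huniq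
      simpa using this
    -- full derivative of F kills (e_j, X-column)
    have hcomp_i : ∀ i : Fin n, fderiv ℝ (fun r => F r i) q
        = (ContinuousLinearMap.proj i).comp (fderiv ℝ F q) := fun i =>
      HasFDerivAt.fderiv
        (((ContinuousLinearMap.proj i : (Fin n → ℝ) →L[ℝ] ℝ).hasFDerivAt).comp q
          (hFd q hq).hasFDerivAt)
    have h2 : fderiv ℝ F q ((Pi.single j 1 : Fin m → ℝ), fun i => X q i j) = 0 := by
      funext i
      have := hFint q hq i j
      rw [hcomp_i i] at this
      simpa using this
    -- injectivity
    have h3 : fderiv ℝ F q ((0 : Fin m → ℝ),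
        fderiv ℝ S p ((Pi.single j 1 : Fin m → ℝ), 0) - fun i => X q i j) = 0 := by
      have hdiff : ((Pi.single j 1 : Fin m → ℝ),
            fderiv ℝ S p ((Pi.single j 1 : Fin m → ℝ), 0))
          - ((Pi.single j 1 : Fin m → ℝ), fun i => X q i j)
          = ((0 : Fin m → ℝ),
            fderiv ℝ S p ((Pi.single j 1 : Fin m → ℝ), 0) - fun i => X q i j) := by
        simp [Prod.ext_iff]
      rw [← hdiff, map_sub, h1, h2, sub_zero]
    have hinj := (hFinv q hq).injective
    have h4 : fderiv ℝ S p ((Pi.single j 1 : Fin m → ℝ), 0) - (fun i => X q i j) = 0 := by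
      apply hinj
      show fderiv ℝ F q ((0 : Fin m → ℝ), _) = fderiv ℝ F q ((0 : Fin m → ℝ), (0 : Fin n → ℝ))
      rw [h3]
      exact (map_zero (fderiv ℝ F q)).symm
    exact sub_eq_zero.mp h4
  -- Step 2: for fixed y ∈ V, t ↦ Ψ (t, S (t, y)) has zero derivative on T
  have hconst : ∀ y ∈ V, ∀ t ∈ T, Ψ (t, S (t, y)) = Ψ (t₀, S (t₀, y)) := by
    intro y hy
    have hder : ∀ t ∈ T, HasFDerivAt (fun t' => Ψ (t', S (t', y)))
        (0 : (Fin m → ℝ) →L[ℝ] ℝ) t := by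
      intro t ht
      have hp : ((t, y) : (Fin m → ℝ) × (Fin n → ℝ)) ∈ T ×ˢ V := ⟨ht, hy⟩
      set p : (Fin m → ℝ) × (Fin n → ℝ) := (t, y) with hp_def
      set q := (p.1, S p) with hq_def
      have hq : q ∈ T ×ˢ V := hSin p hp
      have hg : HasFDerivAt (fun r : (Fin m → ℝ) × (Fin n → ℝ) => Ψ (r.1, S r))
          ((fderiv ℝ Ψ q).comp
            ((ContinuousLinearMap.fst ℝ (Fin m → ℝ) (Fin n → ℝ)).prod (fderiv ℝ S p))) p :=
        (hΨd q hq).hasFDerivAt.comp p (hG p hp)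
      have hι : HasFDerivAt (fun t' : Fin m → ℝ => ((t', y) : (Fin m → ℝ) × (Fin n → ℝ)))
          ((ContinuousLinearMap.id ℝ (Fin m → ℝ)).prod
            (0 : (Fin m → ℝ) →L[ℝ] (Fin n → ℝ))) t :=
        HasFDerivAt.prodMk (hasFDerivAt_id t) (hasFDerivAt_const y t)
      have hh := hg.comp t hι
      have hzero : (((fderiv ℝ Ψ q).comp
            ((ContinuousLinearMap.fst ℝ (Fin m → ℝ) (Fin n → ℝ)).prod (fderiv ℝ S p))).comp
          ((ContinuousLinearMap.id ℝ (Fin m → ℝ)).prod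
            (0 : (Fin m → ℝ) →L[ℝ] (Fin n → ℝ)))) = 0 := by
        apply aux_pi_apply_eq_zero
        intro j
        have hXcol := hdS p hp j
        simp only [ContinuousLinearMap.comp_apply, ContinuousLinearMap.prod_apply,
          ContinuousLinearMap.id_apply, ContinuousLinearMap.zero_apply,
          ContinuousLinearMap.coe_fst']
        rw [hXcol]
        exact hΨint q hq j
      rw [hzero] at hh
      exact hh
    intro t ht
    exact aux_const_of_hasFDerivAt_zero hTopen hTconn.isPreconnected hder ht ht₀
  -- conclusion
  intro p hp
  have hFp : F p ∈ V := hFin p hp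
  have h1 := hconst (F p) hFp p.1 hp.1
  have h2 : S (p.1, F p) = p.2 := hSF p hp
  simp only []
  rw [← h1, h2]
end
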